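/- arXiv:2207.02284 — 2 statements merged into one kernel-verified Lean document; each statement's English description precedes it below -/
import Mathlib

section
/- For every natural number n, ∑_{k=0}^{n} S(n,k) ≤ 2^((2n+1)^2). That is, the sum over all k from 0 to n of the paper's lower bounds S(n,k) on the numbers of lattice-knot diagrams of each stratum never exceeds the total number 2^((2n+1)^2) of lattice knots on the (2n+1)×(2n+1) lattice. -/
/-- `ε(d) = 1` if `d ≥ 2` and `ε(d) = 0` if `d ≤ 1`. -/
def eps (d : ℕ) : ℕ := if 2 ≤ d then 1 else 0

/-- The paper's lower bound `L(n,k)` on the number of copies of an untiable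
`(2k+1)×(2k+1)` lattice inside the `(2n+1)×(2n+1)` lattice. -/
def L (n k : ℕ) : ℕ :=
  (n - k + 1) ^ 2 *
    (2 ^ (2 * (n - k) * (n + k + 2)) + eps (n - k) * 2 ^ ((n - k) * (n + 3 * k + 4)))

/-- The multiplicities `c_0 = 1`, `c_1 = 6`, `c_k = 8k` for `k ≥ 2`. -/
def c (k : ℕ) : ℕ := if k = 0 then 1 else if k = 1 then 6 else 8 * k

/-- The paper's lower bound `S(n,k) = c_k · L(n,k)` on the number of lattice-knot
diagrams on the `(2n+1)×(2n+1)` lattice whose knot type first appears on the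
`(2k+1)×(2k+1)` lattice. -/
def S (n k : ℕ) : ℕ := c k * L n k

lemma c_le (k : ℕ) : c k ≤ 2 ^ (k + 3) := by
  unfold c
  split_ifs with h1 h2
  · exact Nat.one_le_two_pow
  · subst h2; norm_num
  · have := Nat.lt_two_pow_self (n := k)
    calc 8 * k ≤ 8 * 2 ^ k := by omega
      _ = 2 ^ (k + 3) := by ring

lemma sq_le2 (d : ℕ) : (d + 1) ^ 2 ≤ 2 ^ (2 * d) := by
  have h : d + 1 ≤ 2 ^ d := Nat.lt_two_pow_self (n := d)
  calc (d + 1) ^ 2 ≤ (2 ^ d) ^ 2 := Nat.pow_le_pow_left h 2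
    _ = 2 ^ (2 * d) := by rw [← pow_mul, mul_comm]

lemma key (n k : ℕ) (hk : k ≤ n) (hn : 2 ≤ n) :
    S n k ≤ 2 ^ (4 * n ^ 2 + 4 * n - k) := by
  obtain ⟨d, rfl⟩ : ∃ d, n = k + d := ⟨n - k, by omega⟩
  have hd : k + d - k = d := by omega
  have hBA : (k + d - k) * (k + d + 3 * k + 4) ≤ 2 * (k + d - k) * (k + d + k + 2) := by
    rw [hd]; nlinarith [sq_nonneg (d : ℤ)]
  have hL : L (k + d) k ≤ 2 ^ (2 * d) * 2 ^ (2 * d * (2 * k + d + 2) + 1) := by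
    unfold L
    rw [hd]
    have h1 : (d + 1) ^ 2 ≤ 2 ^ (2 * d) := sq_le2 d
    have h2 : 2 ^ (2 * d * (k + d + k + 2)) + eps d * 2 ^ (d * (k + d + 3 * k + 4)) ≤
        2 ^ (2 * d * (2 * k + d + 2) + 1) := by
      have heps : eps d ≤ 1 := by unfold eps; split_ifs <;> omega
      have hB : d * (k + d + 3 * k + 4) ≤ 2 * d * (2 * k + d + 2) := by nlinarith
      have hA : 2 * d * (k + d + k + 2) = 2 * d * (2 * k + d + 2) := by ring
      rw [hA, pow_succ]
      have : eps d * 2 ^ (d * (k + d + 3 * k + 4)) ≤ 2 ^ (2 * d * (2 * k + d + 2)) := by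
        calc eps d * 2 ^ (d * (k + d + 3 * k + 4)) ≤ 1 * 2 ^ (d * (k + d + 3 * k + 4)) :=
              Nat.mul_le_mul_right _ heps
          _ = 2 ^ (d * (k + d + 3 * k + 4)) := one_mul _
          _ ≤ 2 ^ (2 * d * (2 * k + d + 2)) := Nat.pow_le_pow_right (by norm_num) hB
      omega
    exact Nat.mul_le_mul h1 h2
  have hS : S (k + d) k ≤ 2 ^ ((k + 3) + (2 * d + (2 * d * (2 * k + d + 2) + 1))) := by
    unfold S
    calc c k * L (k + d) k ≤ 2 ^ (k + 3) * (2 ^ (2 * d) * 2 ^ (2 * d * (2 * k + d + 2) + 1)) :=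
          Nat.mul_le_mul (c_le k) hL
      _ = 2 ^ ((k + 3) + (2 * d + (2 * d * (2 * k + d + 2) + 1))) := by
          rw [← pow_add, ← pow_add]
  refine hS.trans (Nat.pow_le_pow_right (by norm_num) ?_)
  have hE : 4 * (k + d) ^ 2 + 4 * (k + d) - k =
      4 * k ^ 2 + 8 * k * d + 4 * d ^ 2 + 3 * k + 4 * d := by
    have : 4 * (k + d) ^ 2 + 4 * (k + d) = 4 * k ^ 2 + 8 * k * d + 4 * d ^ 2 + 4 * k + 4 * d := by
      ring
    omega
  rw [hE]
  nlinarith [sq_nonneg k, sq_nonneg d, hn]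

lemma geom (n : ℕ) : ∑ k ∈ Finset.range (n + 1), 2 ^ (n - k) = 2 ^ (n + 1) - 1 := by
  induction n with
  | zero => simp
  | succ n ih =>
    rw [Finset.sum_range_succ' (fun k => 2 ^ (n + 1 - k)) (n + 1)]
    have h1 : ∑ k ∈ Finset.range (n + 1), 2 ^ (n + 1 - (k + 1)) = 2 ^ (n + 1) - 1 := by
      rw [← ih]; apply Finset.sum_congr rfl; intro k _; congr 1; omega
    rw [h1]
    have : (1:ℕ) ≤ 2 ^ (n + 1) := Nat.one_le_two_pow
    simp only [Nat.sub_zero, pow_succ]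
    omega

/-- The sum of the lower bounds `S(n,k)` over all strata `k = 0, …, n` never
exceeds the total number `2^((2n+1)^2)` of lattice knots on the
`(2n+1)×(2n+1)` lattice. -/
theorem sum_lower_bounds_le_total (n : ℕ) :
    ∑ k ∈ Finset.range (n + 1), S n k ≤ 2 ^ ((2 * n + 1) ^ 2) := by
  match n, Nat.lt_or_ge n 2 with
  | 0, _ => norm_num [S, L, c, eps]
  | 1, _ => norm_num [Finset.sum_range_succ, S, L, c, eps]
  | (m+2), _ =>
    set n := m + 2 with hn
    have hn2 : 2 ≤ n := by omega
    have hE : (2 * n + 1) ^ 2 = 4 * n ^ 2 + 4 * n + 1 := by ring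
    calc ∑ k ∈ Finset.range (n + 1), S n k
        ≤ ∑ k ∈ Finset.range (n + 1), 2 ^ (4 * n ^ 2 + 4 * n - k) := by
          apply Finset.sum_le_sum
          intro k hk
          exact key n k (by simpa using Nat.lt_succ_iff.mp (Finset.mem_range.mp hk)) hn2
      _ = ∑ k ∈ Finset.range (n + 1), 2 ^ (4 * n ^ 2 + 3 * n) * 2 ^ (n - k) := by
          apply Finset.sum_congr rfl
          intro k hk
          rw [← pow_add]
          congr 1
          have hk' : k ≤ n := Nat.lt_succ_iff.mp (Finset.mem_range.mp hk)
          have : n ≤ 4 * n ^ 2 + 4 * n := by nlinarith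
          omega
      _ = 2 ^ (4 * n ^ 2 + 3 * n) * (2 ^ (n + 1) - 1) := by
          rw [← Finset.mul_sum, geom]
      _ ≤ 2 ^ (4 * n ^ 2 + 3 * n) * 2 ^ (n + 1) := by
          exact Nat.mul_le_mul le_rfl (Nat.sub_le _ _)
      _ = 2 ^ ((2 * n + 1) ^ 2) := by rw [← pow_add, hE]; congr 1; omega
end

section
/- For all natural numbers n and k with 1 ≤ k ≤ n, one has S(n,k) < S(n,0). That is, the paper's lower bound on the number of unknot diagrams on the (2n+1)×(2n+1) lattice strictly exceeds the lower bound for every nontrivial stratum. -/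
/-- For `1 ≤ k ≤ n`, the lower bound for the nontrivial stratum `k` is strictly
less than the lower bound for unknot diagrams. -/
theorem unknot_bound_dominates (n k : ℕ) (hk : 1 ≤ k) (hkn : k ≤ n) :
    S n k < S n 0 := by
  obtain ⟨d, rfl⟩ : ∃ d, n = k + d := ⟨n - k, by omega⟩
  have h1 : k + d - k = d := by omega
  have h2 : k + d - 0 = k + d := by omega
  have hck : c k ≤ 8 * k := by unfold c; split_ifs <;> omega
  have hepsd : eps d ≤ 1 := by unfold eps; split_ifs <;> omega
  have hexp : d * (k + d + 3 * k + 4) ≤ 2 * d * (k + d + k + 2) := by nlinarith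
  have key : 2 * c k < 2 ^ (2 * k ^ 2 + 4 * k) := by
    have hk2 : k < 2 ^ k := Nat.lt_two_pow_self (n := k)
    calc 2 * c k ≤ 16 * k := by omega
      _ < 16 * 2 ^ k := by omega
      _ = 2 ^ (k + 4) := by rw [pow_add]; ring
      _ ≤ 2 ^ (2 * k ^ 2 + 4 * k) := Nat.pow_le_pow_right (by norm_num) (by nlinarith)
  have hsmall : eps d * 2 ^ (d * (k + d + 3 * k + 4)) ≤ 2 ^ (2 * d * (k + d + k + 2)) :=
    calc eps d * 2 ^ (d * (k + d + 3 * k + 4))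
        ≤ 1 * 2 ^ (2 * d * (k + d + k + 2)) := by
          exact Nat.mul_le_mul hepsd (Nat.pow_le_pow_right (by norm_num) hexp)
      _ = 2 ^ (2 * d * (k + d + k + 2)) := one_mul _
  have hL : S (k + d) k ≤ c k * ((d + 1) ^ 2 * (2 * 2 ^ (2 * d * (k + d + k + 2)))) := by
    unfold S L
    rw [h1]
    have : 2 ^ (2 * d * (k + d + k + 2)) + eps d * 2 ^ (d * (k + d + 3 * k + 4))
        ≤ 2 * 2 ^ (2 * d * (k + d + k + 2)) := by omega
    exact Nat.mul_le_mul_left _ (Nat.mul_le_mul_left _ this)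
  have hR : (k + d + 1) ^ 2 * 2 ^ (2 * (k + d) * (k + d + 0 + 2)) ≤ S (k + d) 0 := by
    unfold S L c
    simp only [h2]
    norm_num
  refine lt_of_le_of_lt hL (lt_of_lt_of_le ?_ hR)
  calc c k * ((d + 1) ^ 2 * (2 * 2 ^ (2 * d * (k + d + k + 2))))
      = (2 * c k) * ((d + 1) ^ 2 * 2 ^ (2 * d * (k + d + k + 2))) := by ring
    _ < 2 ^ (2 * k ^ 2 + 4 * k) * ((k + d + 1) ^ 2 * 2 ^ (2 * d * (k + d + k + 2))) := by
        apply Nat.mul_lt_mul_of_lt_of_le key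
        · exact Nat.mul_le_mul_right _ (Nat.pow_le_pow_left (by omega) 2)
        · positivity
    _ = (k + d + 1) ^ 2 * 2 ^ (2 * (k + d) * (k + d + 0 + 2)) := by
        rw [show 2 * (k + d) * (k + d + 0 + 2) = (2 * k ^ 2 + 4 * k) + 2 * d * (k + d + k + 2) by ring,
          pow_add]
        ring
end
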